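/- Let p ≥ 1 and α_1,…,α_p ∈ [0,1] with α_p > 0, let A be the associated p×p companion matrix and r = ρ(A), and let u ∈ ℝ^p be given by u_i = r^{−i+1} / Σ_{k=1}^p r^{−k+1}. Define v ∈ ℝ^p by v_i = (Σ_{k=1}^p r^{−k+1}) / (Σ_{k=1}^p k α_k r^{−k}) · Σ_{ℓ=i}^p α_ℓ r^{i−1−ℓ} for i = 1,…,p. Then all coordinates of v are strictly positive, Aᵀ v = r v, and uᵀ v = 1. -/

import Mathlib

open Matrix

noncomputable section

/-- The companion matrix with first row `(α_1, …, α_p)` and subdiagonal entries `1`. -/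
def companion (p : ℕ) (α : Fin p → ℝ) : Matrix (Fin p) (Fin p) ℝ :=
  Matrix.of fun i j => if (i : ℕ) = 0 then α j else if (i : ℕ) = (j : ℕ) + 1 then 1 else 0

/-- The spectral radius of a real matrix: the maximum (supremum) of the moduli of its
complex eigenvalues. -/
def specRad {p : ℕ} (A : Matrix (Fin p) (Fin p) ℝ) : ℝ :=
  sSup {r : ℝ | ∃ z ∈ spectrum ℂ (A.map (Complex.ofReal : ℝ → ℂ)), ‖z‖ = r}

/-- The right Perron vector `u_i = r^{−i+1} / Σ_{k=1}^p r^{−k+1}` (1-indexed), written here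
with 0-based indices. -/
def perronU (p : ℕ) (r : ℝ) : Fin p → ℝ :=
  fun i => r ^ (-(i : ℤ)) / ∑ k : Fin p, r ^ (-(k : ℤ))

/-- The left Perron vector
`v_i = (Σ_{k=1}^p r^{−k+1}) / (Σ_{k=1}^p k α_k r^{−k}) · Σ_{ℓ=i}^p α_ℓ r^{i−1−ℓ}`
(1-indexed), written here with 0-based indices. -/
def perronV (p : ℕ) (α : Fin p → ℝ) (r : ℝ) : Fin p → ℝ :=
  fun i => (∑ k : Fin p, r ^ (-(k : ℤ))) /
      (∑ k : Fin p, ((k : ℕ) + 1 : ℝ) * α k * r ^ (-((k : ℕ) + 1 : ℤ))) *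
      ∑ ℓ ∈ Finset.univ.filter (fun ℓ : Fin p => i ≤ ℓ),
        α ℓ * r ^ ((i : ℤ) - (ℓ : ℤ) - 1)

/-! ### Auxiliary lemmas -/

lemma PFaux.zpowneg (x : ℝ) (k : ℕ) : x ^ (-((k:ℤ)+1)) = (x^(k+1))⁻¹ := by
  rw [show (-((k:ℤ)+1)) = -((k+1:ℕ):ℤ) by push_cast; ring, _root_.zpow_neg, zpow_natCast]

lemma PFaux.zpowneg_le {a b : ℝ} (ha : 0 < a) (hab : a ≤ b) (k : ℕ) :
    b ^ (-((k:ℤ)+1)) ≤ a ^ (-((k:ℤ)+1)) := by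
  rw [PFaux.zpowneg, PFaux.zpowneg]
  exact inv_anti₀ (pow_pos ha _) (pow_le_pow_left₀ ha.le hab _)

lemma PFaux.zpowneg_lt {a b : ℝ} (ha : 0 < a) (hab : a < b) (k : ℕ) :
    b ^ (-((k:ℤ)+1)) < a ^ (-((k:ℤ)+1)) := by
  rw [PFaux.zpowneg, PFaux.zpowneg]
  exact inv_strictAnti₀ (pow_pos ha _) (pow_lt_pow_left₀ hab ha.le (by omega))

lemma PFaux.gAnti (p : ℕ) (hp : 0 < p) (α : Fin p → ℝ) (hα : ∀ i, 0 ≤ α i)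
    (hαp : 0 < α ⟨p - 1, Nat.sub_lt hp Nat.one_pos⟩) {a b : ℝ} (ha : 0 < a) (hab : a < b) :
    (∑ j : Fin p, α j * b ^ (-((j:ℕ)+1) : ℤ)) < ∑ j : Fin p, α j * a ^ (-((j:ℕ)+1) : ℤ) := by
  apply Finset.sum_lt_sum
  · intro j _
    exact mul_le_mul_of_nonneg_left (PFaux.zpowneg_le ha hab.le _) (hα j)
  · exact ⟨⟨p-1, by omega⟩, Finset.mem_univ _,
      mul_lt_mul_of_pos_left (PFaux.zpowneg_lt ha hab _) hαp⟩

lemma PFaux.natZpow (p : ℕ) (α : Fin p → ℝ) {t : ℝ} (ht : 0 < t) :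
    (∑ j : Fin p, α j * t ^ (p - 1 - (j:ℕ))) = t^p * ∑ j : Fin p, α j * t ^ (-((j:ℕ)+1) : ℤ) := by
  rw [Finset.mul_sum]
  apply Finset.sum_congr rfl
  intro j _
  have hj : (j:ℕ) < p := j.2
  have : ((p - 1 - (j:ℕ) : ℕ) : ℤ) = (p:ℤ) + (-((j:ℕ)+1)) := by
    push_cast [Nat.cast_sub (by omega : (j:ℕ) ≤ p - 1), Nat.cast_sub (by omega : 1 ≤ p)]
    ring
  rw [← zpow_natCast t (p - 1 - (j:ℕ)), this, zpow_add₀ ht.ne', zpow_natCast]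
  ring

/-- existence of a positive root of the characteristic equation, normalized form -/
lemma PFaux.exRoot (p : ℕ) (hp : 0 < p) (α : Fin p → ℝ) (hα : ∀ i, 0 ≤ α i)
    (hαp : 0 < α ⟨p - 1, Nat.sub_lt hp Nat.one_pos⟩) :
    ∃ c > 0, (∑ j : Fin p, α j * c ^ (-((j:ℕ)+1) : ℤ)) = 1 := by
  set h : ℝ → ℝ := fun t => t^p - ∑ j : Fin p, α j * t ^ (p - 1 - (j:ℕ)) with hh
  have hcont : Continuous h := by
    apply Continuous.sub (continuous_pow p)
    exact continuous_finset_sum _ fun j _ => continuous_const.mul (continuous_pow _)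
  set X : ℝ := 1 + ∑ j : Fin p, α j with hX
  have hsum0 : 0 < ∑ j : Fin p, α j :=
    Finset.sum_pos' (fun i _ => hα i) ⟨⟨p-1, by omega⟩, Finset.mem_univ _, hαp⟩
  have hX1 : 1 < X := by simp [hX]; linarith
  have hXpos : (0:ℝ) < X := by linarith
  have h0 : h 0 < 0 := by
    have : ∀ j : Fin p, α j * (0:ℝ) ^ (p - 1 - (j:ℕ)) = if j = ⟨p-1, by omega⟩ then α j else 0 := by
      intro j
      by_cases hj : j = ⟨p-1, by omega⟩
      · subst hj; simp
      · have : 0 < p - 1 - (j:ℕ) := by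
          have := j.2
          have : (j:ℕ) ≠ p - 1 := fun hc => hj (Fin.ext hc)
          omega
        simp [if_neg hj, zero_pow (by omega : p - 1 - (j:ℕ) ≠ 0)]
    simp only [hh, Finset.sum_congr rfl (fun j _ => this j), Finset.sum_ite_eq' , Finset.mem_univ,
      if_true]
    simp [zero_pow hp.ne', hαp]
  have hXp : 0 < h X := by
    have hb : ∀ j : Fin p, α j * X ^ (p - 1 - (j:ℕ)) ≤ α j * X ^ (p-1) := by
      intro j
      exact mul_le_mul_of_nonneg_left (pow_le_pow_right₀ hX1.le (by omega)) (hα j)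
    have : (∑ j : Fin p, α j * X ^ (p - 1 - (j:ℕ))) ≤ (∑ j : Fin p, α j) * X ^ (p-1) := by
      rw [Finset.sum_mul]
      exact Finset.sum_le_sum fun j _ => hb j
    have hXpow : (0:ℝ) < X ^ (p-1) := pow_pos hXpos _
    have hlt : (∑ j : Fin p, α j) * X ^ (p-1) < X ^ p := by
      have : X ^ p = X * X ^ (p-1) := by
        rw [← pow_succ']
        congr 1
        omega
      rw [this]
      apply mul_lt_mul_of_pos_right _ hXpow
      linarith
    simp only [hh]
    linarith
  obtain ⟨c, hc, hc0⟩ : ∃ c ∈ Set.Icc (0:ℝ) X, h c = 0 := by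
    have := intermediate_value_Icc hXpos.le hcont.continuousOn (a := 0) (b := X)
    obtain ⟨c, hc, hc0⟩ := this ⟨h0.le, hXp.le⟩
    exact ⟨c, hc, hc0⟩
  have hcpos : 0 < c := by
    rcases hc.1.lt_or_eq with h1 | h1
    · exact h1
    · exfalso; rw [← h1] at hc0; linarith
  refine ⟨c, hcpos, ?_⟩
  have : (∑ j : Fin p, α j * c ^ (p - 1 - (j:ℕ))) = c ^ p := by
    simp only [hh] at hc0; linarith
  rw [PFaux.natZpow p α hcpos] at this
  exact mul_left_cancel₀ (pow_pos hcpos p).ne' (by rw [this, mul_one])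

/-- the spectral radius of the companion matrix is the positive root. -/
lemma PFaux.specRad_eq (p : ℕ) (hp : 0 < p) (α : Fin p → ℝ) (hα : ∀ i, 0 ≤ α i)
    (hαp : 0 < α ⟨p - 1, Nat.sub_lt hp Nat.one_pos⟩) {c : ℝ} (hc : 0 < c)
    (hroot : (∑ j : Fin p, α j * c ^ (-((j:ℕ)+1) : ℤ)) = 1) :
    specRad (companion p α) = c := by
  set M := (companion p α).map (Complex.ofReal) with hM
  have hMij : ∀ i j : Fin p, M i j =
      if (i:ℕ) = 0 then (α j : ℂ) else if (i:ℕ) = (j:ℕ)+1 then 1 else 0 := by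
    intro i j
    simp only [hM, companion, Matrix.map_apply, Matrix.of_apply, apply_ite Complex.ofReal,
      Complex.ofReal_one, Complex.ofReal_zero]
  have hcnat : (∑ j : Fin p, α j * c ^ (p - 1 - (j:ℕ))) = c ^ p := by
    rw [PFaux.natZpow p α hc, hroot, mul_one]
  have hcnatC : (∑ j : Fin p, (α j : ℂ) * (c:ℂ) ^ (p - 1 - (j:ℕ))) = (c:ℂ) ^ p := by
    have := congrArg (Complex.ofReal) hcnat
    push_cast at this
    exact this
  have hc0C : (c:ℂ) ≠ 0 := by exact_mod_cast hc.ne'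
  have hmem : (c : ℂ) ∈ spectrum ℂ M := by
    rw [spectrum.mem_iff]
    intro hunit
    rw [Matrix.isUnit_iff_isUnit_det, isUnit_iff_ne_zero] at hunit
    apply hunit
    rw [← Matrix.exists_mulVec_eq_zero_iff]
    refine ⟨fun i => (c:ℂ) ^ (p - 1 - (i:ℕ)), ?_, ?_⟩
    · intro h0
      have h1 := congrFun h0 ⟨p-1, by omega⟩
      simp only [Pi.zero_apply] at h1
      exact pow_ne_zero _ hc0C h1
    · rw [Algebra.algebraMap_eq_smul_one, Matrix.sub_mulVec, Matrix.smul_mulVec,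
        Matrix.one_mulVec, sub_eq_zero]
      funext i
      show (c:ℂ) * (c:ℂ) ^ (p - 1 - (i:ℕ)) = ∑ j, M i j * (c:ℂ) ^ (p - 1 - (j:ℕ))
      rcases Nat.eq_zero_or_pos (i:ℕ) with h0 | h0
      · have : ∀ j : Fin p, M i j * (c:ℂ)^(p-1-(j:ℕ)) = (α j : ℂ) * (c:ℂ)^(p-1-(j:ℕ)) := by
          intro j; rw [hMij, if_pos h0]
        rw [Finset.sum_congr rfl fun j _ => this j, hcnatC, h0]
        rw [show p - 1 - 0 = p - 1 by omega, ← pow_succ', show p - 1 + 1 = p by omega]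
      · have hi : (i:ℕ) - 1 < p := by omega
        rw [Finset.sum_eq_single ⟨(i:ℕ)-1, hi⟩]
        · rw [hMij]
          rw [if_neg (by omega), if_pos (by simp; omega)]
          rw [one_mul, show p - 1 - ((i:ℕ)-1) = (p - 1 - (i:ℕ)) + 1 by have := i.2; omega,
            pow_succ']
        · intro j _ hj
          rw [hMij, if_neg (by omega), if_neg, zero_mul]
          intro hcon
          apply hj
          apply Fin.ext
          simp only
          omega
        · intro h; exact absurd (Finset.mem_univ _) h
  have hbound : ∀ z ∈ spectrum ℂ M, ‖z‖ ≤ c := by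
    intro z hz
    rw [spectrum.mem_iff] at hz
    have hdet : (algebraMap ℂ (Matrix (Fin p) (Fin p) ℂ) z - M).det = 0 := by
      by_contra h
      exact hz (Matrix.isUnit_iff_isUnit_det _ |>.mpr (isUnit_iff_ne_zero.mpr h))
    obtain ⟨v, hv0, hv⟩ := (Matrix.exists_mulVec_eq_zero_iff).mpr hdet
    rw [Algebra.algebraMap_eq_smul_one, Matrix.sub_mulVec, Matrix.smul_mulVec,
      Matrix.one_mulVec, sub_eq_zero] at hv
    have hMv : ∀ i : Fin p, z * v i = ∑ j, M i j * v j := fun i => congrFun hv i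
    have hrec : ∀ i : Fin p, 0 < (i:ℕ) → v ⟨(i:ℕ)-1, by omega⟩ = z * v i := by
      intro i hi
      have := hMv i
      rw [Finset.sum_eq_single (⟨(i:ℕ)-1, by omega⟩ : Fin p)] at this
      · rw [hMij, if_neg (by omega), if_pos (by simp; omega), one_mul] at this
        exact this.symm
      · intro j _ hj
        rw [hMij, if_neg (by omega), if_neg, zero_mul]
        intro hcon
        exact hj (Fin.ext (by simp only; omega))
      · intro h; exact absurd (Finset.mem_univ _) h
    have hclaim : ∀ k n (h : n + k ≤ p - 1), v ⟨n, by omega⟩ = z^k * v ⟨n+k, by omega⟩ := by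
      intro k
      induction k with
      | zero => intro n h; simp
      | succ k ih =>
        intro n h
        have h1 : v ⟨n, by omega⟩ = z * v ⟨n+1, by omega⟩ := by
          have := hrec ⟨n+1, by omega⟩ (by simp)
          simpa using this
        rw [h1, ih (n+1) (by omega)]
        rw [show (⟨n+1+k, by omega⟩ : Fin p) = ⟨n+(k+1), by omega⟩ from (Fin.mk_eq_mk).mpr (by omega)]
        ring
    set w := v ⟨p-1, by omega⟩ with hw
    have hvj : ∀ j : Fin p, v j = z^(p-1-(j:ℕ)) * w := by
      intro j
      have := hclaim (p-1-(j:ℕ)) (j:ℕ) (by omega)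
      rw [show (⟨(j:ℕ) + (p-1-(j:ℕ)), by omega⟩ : Fin p) = ⟨p-1, by omega⟩ from
        (Fin.mk_eq_mk).mpr (by have := j.2; omega)] at this
      simpa [Fin.eta] using this
    have hwne : w ≠ 0 := by
      intro hw0
      apply hv0
      funext j
      rw [hvj j, hw0, mul_zero]
      rfl
    have hrow0 : (∑ j : Fin p, (α j : ℂ) * z ^ (p - 1 - (j:ℕ))) = z ^ p := by
      have h0 := hMv ⟨0, hp⟩
      have : ∀ j : Fin p, M ⟨0,hp⟩ j * v j = (α j : ℂ) * z^(p-1-(j:ℕ)) * w := by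
        intro j
        rw [hMij, if_pos rfl, hvj j, mul_assoc]
      rw [Finset.sum_congr rfl fun j _ => this j, ← Finset.sum_mul] at h0
      rw [hvj ⟨0,hp⟩] at h0
      simp only at h0
      have h0' : (z * z ^ (p-1-0)) * w = (∑ j : Fin p, (α j:ℂ) * z ^ (p-1-(j:ℕ))) * w := by
        rw [← h0]; ring
      have := mul_right_cancel₀ hwne h0'
      rw [← this, show p - 1 - 0 = p - 1 by omega, ← pow_succ', show p - 1 + 1 = p by omega]
    by_contra hlt
    push_neg at hlt
    set s := ‖z‖ with hs
    have hs0 : 0 < s := lt_trans hc hlt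
    have habs : s ^ p ≤ ∑ j : Fin p, α j * s ^ (p - 1 - (j:ℕ)) := by
      calc s ^ p = ‖z ^ p‖ := by rw [norm_pow]
        _ = ‖∑ j : Fin p, (α j : ℂ) * z ^ (p - 1 - (j:ℕ))‖ := by rw [hrow0]
        _ ≤ ∑ j : Fin p, ‖(α j : ℂ) * z ^ (p - 1 - (j:ℕ))‖ := by
            exact norm_sum_le _ _
        _ = ∑ j : Fin p, α j * s ^ (p - 1 - (j:ℕ)) := by
            apply Finset.sum_congr rfl
            intro j _
            rw [norm_mul, norm_pow, Complex.norm_real, Real.norm_of_nonneg (hα j)]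
    have hstrict : (∑ j : Fin p, α j * s ^ (p - 1 - (j:ℕ))) < s ^ p := by
      rw [PFaux.natZpow p α hs0]
      calc s^p * ∑ j : Fin p, α j * s ^ (-((j:ℕ)+1) : ℤ)
          < s^p * ∑ j : Fin p, α j * c ^ (-((j:ℕ)+1) : ℤ) := by
            exact mul_lt_mul_of_pos_left (PFaux.gAnti p hp α hα hαp hc hlt) (pow_pos hs0 p)
        _ = s^p := by rw [hroot, mul_one]
    linarith
  unfold specRad
  rw [← hM]
  have h1 : c ∈ {r : ℝ | ∃ z ∈ spectrum ℂ M, ‖z‖ = r} :=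
    ⟨(c:ℂ), hmem, by rw [Complex.norm_real, Real.norm_of_nonneg hc.le]⟩
  have h2 : ∀ r ∈ {r : ℝ | ∃ z ∈ spectrum ℂ M, ‖z‖ = r}, r ≤ c := by
    rintro r ⟨z, hz, rfl⟩
    exact hbound z hz
  exact le_antisymm (csSup_le ⟨c, h1⟩ h2) (le_csSup ⟨c, fun r hr => h2 r hr⟩ h1)

/-- the tail sums `T i = ∑_{ℓ ≥ i} α_ℓ c^{i-ℓ-1}` -/
def tailT (p : ℕ) (α : Fin p → ℝ) (c : ℝ) : Fin p → ℝ := fun i =>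
  ∑ ℓ ∈ Finset.univ.filter (fun ℓ : Fin p => i ≤ ℓ), α ℓ * c ^ ((i : ℤ) - (ℓ : ℤ) - 1)

section Aux
variable {p : ℕ} {α : Fin p → ℝ} (hp : 0 < p) (hα : ∀ i, 0 ≤ α i)
  (hαp : 0 < α ⟨p - 1, Nat.sub_lt hp Nat.one_pos⟩) {c : ℝ} (hc : 0 < c)

include hp hα hαp hc in
lemma tailT_pos (i : Fin p) : 0 < tailT p α c i := by
  apply Finset.sum_pos'
  · intro ℓ _
    exact mul_nonneg (hα ℓ) (zpow_pos hc _).le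
  · refine ⟨⟨p-1, by omega⟩, ?_, ?_⟩
    · simp only [Finset.mem_filter, Finset.mem_univ, true_and, Fin.le_def]
      have := i.2; omega
    · exact mul_pos hαp (zpow_pos hc _)

include hp in
lemma tailT_zero (hroot : (∑ j : Fin p, α j * c ^ (-((j:ℕ)+1) : ℤ)) = 1) :
    tailT p α c ⟨0, hp⟩ = 1 := by
  rw [← hroot]
  unfold tailT
  rw [Finset.filter_true_of_mem (fun ℓ _ => by simp [Fin.le_def])]
  apply Finset.sum_congr rfl
  intro ℓ _
  congr 1
  congr 1
  simp
  ring

include hc in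
lemma tailT_step (j : Fin p) (h : (j:ℕ) + 1 < p) :
    c * tailT p α c j = tailT p α c ⟨(j:ℕ)+1, h⟩ + α j := by
  unfold tailT
  have hsplit : (Finset.univ.filter (fun ℓ : Fin p => j ≤ ℓ)) =
      insert j (Finset.univ.filter (fun ℓ : Fin p => (⟨(j:ℕ)+1, h⟩ : Fin p) ≤ ℓ)) := by
    ext ℓ
    simp only [Finset.mem_filter, Finset.mem_univ, true_and, Finset.mem_insert, Fin.le_def,
      Fin.ext_iff]
    omega
  rw [hsplit, Finset.sum_insert (by simp [Fin.le_def]), mul_add, add_comm]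
  congr 1
  · rw [Finset.mul_sum]
    apply Finset.sum_congr rfl
    intro ℓ _
    have he : c ^ ((j:ℤ) - (ℓ:ℤ) - 1) * c
        = c ^ ((((⟨(j:ℕ)+1, h⟩ : Fin p) : ℕ) : ℤ) - (ℓ:ℤ) - 1) := by
      rw [← zpow_add_one₀ hc.ne']
      congr 1
      simp only [Fin.val_mk]
      push_cast
      ring
    calc c * (α ℓ * c ^ ((j:ℤ) - (ℓ:ℤ) - 1))
        = α ℓ * (c ^ ((j:ℤ) - (ℓ:ℤ) - 1) * c) := by ring
      _ = _ := by rw [he]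
  · rw [show ((j:ℤ) - (j:ℤ) - 1) = -1 by ring, _root_.zpow_neg_one]
    field_simp

include hc in
lemma tailT_last (j : Fin p) (h : (j:ℕ) = p - 1) (hpp : 0 < p) :
    c * tailT p α c j = α j := by
  unfold tailT
  have : (Finset.univ.filter (fun ℓ : Fin p => j ≤ ℓ)) = {j} := by
    ext ℓ
    simp only [Finset.mem_filter, Finset.mem_univ, true_and, Finset.mem_singleton, Fin.le_def,
      Fin.ext_iff]
    have := ℓ.2
    omega
  rw [this, Finset.sum_singleton, show ((j:ℤ) - (j:ℤ) - 1) = -1 by ring,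
    _root_.zpow_neg_one, mul_comm c, mul_assoc, inv_mul_cancel₀ hc.ne', mul_one]

include hc in
lemma sum_tailT (hpp : 0 < p) :
    (∑ i : Fin p, c ^ (-(i:ℤ)) * tailT p α c i)
      = ∑ k : Fin p, ((k : ℕ) + 1 : ℝ) * α k * c ^ (-((k : ℕ) + 1 : ℤ)) := by
  unfold tailT
  have h1 : ∀ i : Fin p, c ^ (-(i:ℤ)) *
      (∑ ℓ ∈ Finset.univ.filter (fun ℓ : Fin p => i ≤ ℓ), α ℓ * c ^ ((i:ℤ) - (ℓ:ℤ) - 1))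
      = ∑ ℓ : Fin p, if i ≤ ℓ then α ℓ * c ^ (-((ℓ:ℕ)+1) : ℤ) else 0 := by
    intro i
    rw [Finset.mul_sum, Finset.sum_filter]
    apply Finset.sum_congr rfl
    intro ℓ _
    by_cases hle : i ≤ ℓ
    · rw [if_pos hle, if_pos hle, mul_comm (α ℓ), ← mul_assoc, ← zpow_add₀ hc.ne']
      rw [show (-(i:ℤ) + ((i:ℤ) - (ℓ:ℤ) - 1)) = -((ℓ:ℕ)+1 : ℤ) by push_cast; ring]
      ring
    · simp [hle]
  rw [Finset.sum_congr rfl fun i _ => h1 i, Finset.sum_comm]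
  apply Finset.sum_congr rfl
  intro ℓ _
  rw [← Finset.sum_filter]
  rw [Finset.sum_const]
  have hcard : (Finset.univ.filter (fun i : Fin p => i ≤ ℓ)).card = (ℓ:ℕ) + 1 := by
    have : Finset.univ.filter (fun i : Fin p => i ≤ ℓ) = Finset.Iic ℓ := by
      ext i; simp
    rw [this, Fin.card_Iic]
  rw [hcard, nsmul_eq_mul]
  push_cast
  ring

end Aux

/-- `v` has strictly positive coordinates, `Aᵀ v = r v`, and `uᵀ v = 1`. -/
theorem perronV_left_eigenvector
    (p : ℕ) (hp : 0 < p) (α : Fin p → ℝ)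
    (hα : ∀ i, α i ∈ Set.Icc (0 : ℝ) 1)
    (hαp : 0 < α ⟨p - 1, by omega⟩) :
    (∀ i : Fin p, 0 < perronV p α (specRad (companion p α)) i) ∧
    ((companion p α)ᵀ.mulVec (perronV p α (specRad (companion p α)))
      = specRad (companion p α) • perronV p α (specRad (companion p α))) ∧
    (∑ i : Fin p, perronU p (specRad (companion p α)) i *
        perronV p α (specRad (companion p α)) i = 1) := by
  have hα0 : ∀ i, 0 ≤ α i := fun i => (hα i).1
  obtain ⟨c, hc, hroot⟩ := PFaux.exRoot p hp α hα0 hαp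
  have hsr : specRad (companion p α) = c := PFaux.specRad_eq p hp α hα0 hαp hc hroot
  rw [hsr]
  have hS1 : 0 < ∑ k : Fin p, c ^ (-(k : ℤ)) :=
    Finset.sum_pos (fun k _ => zpow_pos hc _) ⟨⟨0,hp⟩, Finset.mem_univ _⟩
  have hD : 0 < ∑ k : Fin p, ((k : ℕ) + 1 : ℝ) * α k * c ^ (-((k : ℕ) + 1 : ℤ)) := by
    apply Finset.sum_pos'
    · intro k _
      exact mul_nonneg (mul_nonneg (by positivity) (hα0 k)) (zpow_pos hc _).le
    · exact ⟨⟨p-1, by omega⟩, Finset.mem_univ _,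
        mul_pos (mul_pos (by positivity) hαp) (zpow_pos hc _)⟩
  set S1 : ℝ := ∑ k : Fin p, c ^ (-(k : ℤ)) with hS1def
  set D : ℝ := ∑ k : Fin p, ((k:ℕ) + 1 : ℝ) * α k * c ^ (-((k:ℕ) + 1 : ℤ)) with hDdef
  have hVeq : ∀ i, perronV p α c i = S1 / D * tailT p α c i := by
    intro i
    unfold perronV tailT
    rw [← hS1def, ← hDdef]
  refine ⟨?_, ?_, ?_⟩
  · intro i
    rw [hVeq]
    exact mul_pos (div_pos hS1 hD) (tailT_pos hp hα0 hαp hc i)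
  · funext j
    show (∑ i : Fin p, (companion p α)ᵀ j i * perronV p α c i) = c * perronV p α c j
    have htr : ∀ i : Fin p, (companion p α)ᵀ j i = companion p α i j := fun i => rfl
    by_cases h : (j:ℕ) + 1 < p
    · have hterm : ∀ i : Fin p, companion p α i j * perronV p α c i =
          (if i = ⟨0,hp⟩ then α j * perronV p α c ⟨0,hp⟩ else 0)
          + (if i = ⟨(j:ℕ)+1,h⟩ then perronV p α c ⟨(j:ℕ)+1,h⟩ else 0) := by
        intro i
        show (if (i:ℕ) = 0 then α j else if (i:ℕ) = (j:ℕ)+1 then 1 else 0) * perronV p α c i = _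
        by_cases h0 : (i:ℕ) = 0
        · obtain rfl : i = ⟨0, hp⟩ := Fin.ext h0
          rw [if_pos h0, if_pos rfl, if_neg (by rw [Fin.ext_iff]; simp only [Fin.val_mk]; omega), add_zero]
        · by_cases h1 : (i:ℕ) = (j:ℕ)+1
          · obtain rfl : i = ⟨(j:ℕ)+1, h⟩ := Fin.ext h1
            rw [if_neg h0, if_pos h1, if_neg (by rw [Fin.ext_iff]; simp only [Fin.val_mk]; omega), if_pos rfl,
              one_mul, zero_add]
          · rw [if_neg h0, if_neg h1, if_neg (fun hcon => h0 (by rw [hcon])),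
              if_neg (fun hcon => h1 (by rw [hcon])), zero_mul, add_zero]
      rw [Finset.sum_congr rfl fun i _ => (htr i) ▸ hterm i, Finset.sum_add_distrib,
        Finset.sum_ite_eq' Finset.univ (⟨0,hp⟩ : Fin p),
        Finset.sum_ite_eq' Finset.univ (⟨(j:ℕ)+1,h⟩ : Fin p), if_pos (Finset.mem_univ _),
        if_pos (Finset.mem_univ _)]
      rw [hVeq, hVeq, hVeq, tailT_zero hp hroot, mul_one]
      have hstep := tailT_step (α := α) hc j h
      calc α j * (S1/D) + S1/D * tailT p α c ⟨(j:ℕ)+1,h⟩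
          = S1/D * (tailT p α c ⟨(j:ℕ)+1,h⟩ + α j) := by ring
        _ = S1/D * (c * tailT p α c j) := by rw [← hstep]
        _ = c * (S1/D * tailT p α c j) := by ring
    · have hj : (j:ℕ) = p - 1 := by have := j.2; omega
      have hterm : ∀ i : Fin p, companion p α i j * perronV p α c i =
          (if i = ⟨0,hp⟩ then α j * perronV p α c ⟨0,hp⟩ else 0) := by
        intro i
        show (if (i:ℕ) = 0 then α j else if (i:ℕ) = (j:ℕ)+1 then 1 else 0) * perronV p α c i = _
        by_cases h0 : (i:ℕ) = 0
        · obtain rfl : i = ⟨0, hp⟩ := Fin.ext h0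
          rw [if_pos h0, if_pos rfl]
        · rw [if_neg h0, if_neg (by have := i.2; omega), if_neg (fun hcon => h0 (by rw [hcon])),
            zero_mul]
      rw [Finset.sum_congr rfl fun i _ => (htr i) ▸ hterm i,
        Finset.sum_ite_eq' Finset.univ (⟨0,hp⟩ : Fin p), if_pos (Finset.mem_univ _)]
      rw [hVeq, hVeq, tailT_zero hp hroot, mul_one]
      have hlast := tailT_last (α := α) hc j hj hp
      calc α j * (S1/D) = S1/D * (c * tailT p α c j) := by rw [hlast]; ring
        _ = c * (S1/D * tailT p α c j) := by ring
  · have hterm : ∀ i : Fin p, perronU p c i * perronV p α c i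
        = (c ^ (-(i:ℤ)) * tailT p α c i) / D := by
      intro i
      unfold perronU
      rw [← hS1def, hVeq]
      field_simp
    rw [Finset.sum_congr rfl fun i _ => hterm i, ← Finset.sum_div, sum_tailT (α := α) hc hp, ← hDdef,
      div_self hD.ne']

end
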